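/- Assume the sequence of substitutions $(S_{a_n})$ is primitive. Then the dynamical system $(X_{\bar a},T)$, where $T$ is the translation action of $\mathbb R^d$, is minimal: for every $x\in X_{\bar a}$ the orbit $\{\vec t+x : \vec t\in\mathbb R^d\}$ is dense in $(X_{\bar a},d_T)$. -/

import Mathlib

open Filter Topology Set Metric MeasureTheory

noncomputable section

/-- Points of `ℝ^d`. -/
abbrev Pt (d : ℕ) := EuclideanSpace ℝ (Fin d)

/-- A patch is a collection of subsets of `ℝ^d` (intended: tiles with disjoint interiors). -/
abbrev Patch (d : ℕ) := Set (Set (Pt d))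

/-- Translation of a single tile. -/
def tileTrans {d : ℕ} (t : Pt d) (D : Set (Pt d)) : Set (Pt d) := (fun p => t + p) '' D

/-- Translation of a patch, `t + x`. -/
def patchTrans {d : ℕ} (t : Pt d) (x : Patch d) : Patch d := tileTrans t '' x

/-- A tile: compact, connected, and the closure of its interior. -/
def IsTile {d : ℕ} (D : Set (Pt d)) : Prop :=
  IsCompact D ∧ IsConnected D ∧ D = closure (interior D)

/-- A patch: a collection of tiles with pairwise disjoint interiors. -/
def IsPatch {d : ℕ} (x : Patch d) : Prop :=
  (∀ D ∈ x, IsTile D) ∧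
  ∀ D ∈ x, ∀ D' ∈ x, D ≠ D' → interior D ∩ interior D' = ∅

/-- The support of a patch: the union of its tiles. -/
def psupp {d : ℕ} (x : Patch d) : Set (Pt d) := ⋃ D ∈ x, D

/-- A tiling of `ℝ^d`: a patch whose support is all of `ℝ^d`. -/
def IsTiling {d : ℕ} (x : Patch d) : Prop := IsPatch x ∧ psupp x = univ

/-- The tiles occurring in tilings of `X`. -/
def TilesOf {d : ℕ} (X : Set (Patch d)) : Set (Set (Pt d)) := {D | ∃ x ∈ X, D ∈ x}

/-- `𝒫(X)`: the finite patches contained in tilings of `X`. -/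
def Patches {d : ℕ} (X : Set (Patch d)) : Set (Patch d) :=
  {x' | x'.Finite ∧ ∃ x ∈ X, x' ⊆ x}

/-- `𝒫^N(X)`: the patches with `N` tiles contained in tilings of `X`. -/
def PatchesCard {d : ℕ} (X : Set (Patch d)) (N : ℕ) : Set (Patch d) :=
  {x' | x'.Finite ∧ x'.ncard = N ∧ ∃ x ∈ X, x' ⊆ x}

/-- `X` is invariant under the translation action. -/
def TransInvariant {d : ℕ} (X : Set (Patch d)) : Prop :=
  ∀ t : Pt d, ∀ x ∈ X, patchTrans t x ∈ X

/-- Finite local complexity: for each `N` there are only finitely many `N`-tile patches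
in tilings of `X` up to translation. -/
def FLC {d : ℕ} (X : Set (Patch d)) : Prop :=
  ∀ N : ℕ, ∃ F : Finset (Patch d),
    ∀ x' ∈ PatchesCard X N, ∃ y ∈ F, ∃ t : Pt d, patchTrans t y = x'

/-- The tiling metric `d_T`. -/
def dT {d : ℕ} (x y : Patch d) : ℝ :=
  sInf ({Real.sqrt 2 / 2} ∪
    {r : ℝ | 0 < r ∧ r < Real.sqrt 2 / 2 ∧
      ∃ x' ⊆ x, ∃ y' ⊆ y,
        Bornology.IsBounded (psupp x') ∧ Bornology.IsBounded (psupp y') ∧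
        closedBall (0 : Pt d) (1 / r) ⊆ psupp x' ∧
        closedBall (0 : Pt d) (1 / r) ⊆ psupp y' ∧
        ∃ t : Pt d, ‖t‖ ≤ r ∧ patchTrans t x' = y'})

/-- A (self-similar) substitution on the tiles of `X`, with dilatation factor `lam`,
extended tile-by-tile to patches, mapping finite patches of `X` to finite patches of `X`
and tilings of `X` to tilings of `X`. -/
structure Substitution (d : ℕ) (X : Set (Patch d)) where
  map : Set (Pt d) → Patch d
  lam : ℝ
  one_lt_lam : 1 < lam
  supp_eq : ∀ D ∈ TilesOf X, psupp (map D) = (fun p => lam • p) '' D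
  equivar : ∀ (t : Pt d) (D : Set (Pt d)), map (tileTrans t D) = patchTrans (lam • t) (map D)
  maps_patches : ∀ x' ∈ Patches X, (⋃ D ∈ x', map D) ∈ Patches X
  maps_X : ∀ x ∈ X, (⋃ D ∈ x, map D) ∈ X

/-- A substitution applied to a patch, tile by tile. -/
def substPatch {d : ℕ} {X : Set (Patch d)} (S : Substitution d X) (x : Patch d) : Patch d :=
  ⋃ D ∈ x, S.map D

/-- The structure matrix of a substitution with respect to prototiles `Dp`:
entry `(i,j)` is the number of tiles equivalent (translation-equal) to `Dp i` in `S (Dp j)`. -/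
def structMat {d l : ℕ} {X : Set (Patch d)} (Dp : Fin l → Set (Pt d)) (S : Substitution d X) :
    Matrix (Fin l) (Fin l) ℕ :=
  fun i j => {D | D ∈ S.map (Dp j) ∧ ∃ t : Pt d, D = tileTrans t (Dp i)}.ncard

/-- `Dp` is a complete family of pairwise non-equivalent prototiles of `X`. -/
def IsPrototileBasis {d l : ℕ} (X : Set (Patch d)) (Dp : Fin l → Set (Pt d)) : Prop :=
  (∀ i, Dp i ∈ TilesOf X) ∧
  (∀ i j, i ≠ j → ∀ t : Pt d, tileTrans t (Dp i) ≠ Dp j) ∧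
  ∀ D ∈ TilesOf X, ∃ i, ∃ t : Pt d, tileTrans t (Dp i) = D

/-- `S^n_ā = S_{a_1} ∘ S_{a_2} ∘ ⋯ ∘ S_{a_n}` acting on patches (`a 0` plays the role
of `a_1`). -/
def substSeq {d k : ℕ} {X : Set (Patch d)} (S : Fin k → Substitution d X) :
    (ℕ → Fin k) → ℕ → Patch d → Patch d
  | _, 0 => id
  | a, n + 1 => fun x => substPatch (S (a 0)) (substSeq S (fun i => a (i + 1)) n x)

/-- `A^n_ā = A_{a_1} A_{a_2} ⋯ A_{a_n}`. -/
def matSeq {l k : ℕ} (A : Fin k → Matrix (Fin l) (Fin l) ℕ) :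
    (ℕ → Fin k) → ℕ → Matrix (Fin l) (Fin l) ℕ
  | _, 0 => 1
  | a, n + 1 => A (a 0) * matSeq A (fun i => a (i + 1)) n

/-- Primitivity of the sequence of structure matrices `(A_{a_n})`: for every `n` some
product `A_{a_n} A_{a_{n+1}} ⋯ A_{a_{n+N}}` has all entries positive. -/
def SeqPrimitive {l k : ℕ} (A : Fin k → Matrix (Fin l) (Fin l) ℕ) (a : ℕ → Fin k) : Prop :=
  ∀ n : ℕ, ∃ N : ℕ, ∀ p q : Fin l, 0 < matSeq A (fun m => a (n + m)) (N + 1) p q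

/-- The multi-substitution tiling space `X_ā` (with initial tile `D`). -/
def multiSpace {d k : ℕ} {X : Set (Patch d)} (S : Fin k → Substitution d X) (a : ℕ → Fin k)
    (D : Set (Pt d)) : Set (Patch d) :=
  {x | x ∈ X ∧ ∀ x' ⊆ x, x'.Finite →
    ∃ n : ℕ, 0 < n ∧ ∃ t : Pt d, patchTrans t x' ⊆ substSeq S a n {D}}

/-- The substitution tiling space of a single substitution, given by its action
`F` on patches (with initial tile `D`). -/
def substSpaceF {d : ℕ} (X : Set (Patch d)) (F : Patch d → Patch d) (D : Set (Pt d)) :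
    Set (Patch d) :=
  {x | x ∈ X ∧ ∀ x' ⊆ x, x'.Finite →
    ∃ m : ℕ, 0 < m ∧ ∃ t : Pt d, patchTrans t x' ⊆ F^[m] {D}}

open Classical in
/-- The metric on `Σ = {1,…,k}^ℕ`: `d(ā,b̄) = 1/L` where `L` is the least (1-indexed)
position where the sequences differ, and `0` if they are equal. -/
def dSigma {k : ℕ} (a b : ℕ → Fin k) : ℝ :=
  if h : ∃ n, a n ≠ b n then 1 / ((Nat.find h : ℝ) + 1) else 0

/-- The shift `σ` on `Σ`. -/
def seqShift {k : ℕ} (a : ℕ → Fin k) : ℕ → Fin k := fun n => a (n + 1)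

/-- A substitution is recognizable if it is injective on `X`. -/
def Recognizable {d : ℕ} {X : Set (Patch d)} (S : Substitution d X) : Prop :=
  ∀ x ∈ X, ∀ y ∈ X, substPatch S x = substPatch S y → x = y

/-- A substitution is strongly recognizable if it is recognizable and `S(D') ⊆ S(x)`
implies `D' ∈ x` for every tiling `x ∈ X` and tile `D'`. -/
def StronglyRecognizable {d : ℕ} {X : Set (Patch d)} (S : Substitution d X) : Prop :=
  Recognizable S ∧ ∀ x ∈ X, ∀ D' ∈ TilesOf X, S.map D' ⊆ substPatch S x → D' ∈ x

/-- `L_{x'}(y')`: the number of translated copies of `x'` contained in `y'`. -/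
def Lcount {d : ℕ} (x' y' : Patch d) : ℕ := {t : Pt d | patchTrans t x' ⊆ y'}.ncard

/-- The Euclidean volume of the support of a patch. -/
def pvol {d : ℕ} (y' : Patch d) : ℝ := (volume (psupp y')).toReal

/-- `L^x_{x'}(H)`: the number of translated copies of `x'` contained in `x` whose support
is contained in `H`. -/
def LcountIn {d : ℕ} (x x' : Patch d) (H : Set (Pt d)) : ℕ :=
  {t : Pt d | patchTrans t x' ⊆ x ∧ psupp (patchTrans t x') ⊆ H}.ncard

/-- `H^{+r}`: the set of points at distance at most `r` from `H`. -/
def plusR {d : ℕ} (H : Set (Pt d)) (r : ℝ) : Set (Pt d) := {t | ∃ h ∈ H, dist t h ≤ r}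

/-- Van Hove sequence of subsets of `ℝ^d`. -/
def VanHove {d : ℕ} (H : ℕ → Set (Pt d)) : Prop :=
  ∀ r : ℝ, 0 ≤ r →
    Tendsto (fun n => (volume (plusR (frontier (H n)) r)).toReal / (volume (H n)).toReal)
      atTop (nhds 0)

/-- A tiling of `X_ā` which is an increasing union of translates of the supertiles
`S^{k_n}_ā(D)`. -/
def Hierarchical {d k : ℕ} {X : Set (Patch d)} (S : Fin k → Substitution d X) (a : ℕ → Fin k)
    (x : Patch d) : Prop :=
  ∃ (kn : ℕ → ℕ) (tn : ℕ → Pt d) (D : Set (Pt d)), D ∈ TilesOf X ∧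
    Tendsto kn atTop atTop ∧
    (∀ n, patchTrans (tn n) (substSeq S a (kn n) {D}) ⊆
      patchTrans (tn (n + 1)) (substSeq S a (kn (n + 1)) {D})) ∧
    x = ⋃ n, patchTrans (tn n) (substSeq S a (kn n) {D})

/-- The topology on the space of patches generated by the `d_T`-balls. -/
def tilingTopology (d : ℕ) : TopologicalSpace (Patch d) :=
  TopologicalSpace.generateFrom {U | ∃ (x : Patch d) (r : ℝ), 0 < r ∧ U = {y | dT x y < r}}

/-- The Borel σ-algebra associated to the tiling topology. -/
def tilingMeasurable (d : ℕ) : MeasurableSpace (Patch d) :=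
  @borel (Patch d) (tilingTopology d)

/-- A Borel probability measure concentrated on `Y` and invariant under the translation
action. -/
def GoodMeasure {d : ℕ} (Y : Set (Patch d))
    (μ : @MeasureTheory.Measure (Patch d) (tilingMeasurable d)) : Prop :=
  letI := tilingMeasurable d
  μ Set.univ = 1 ∧ μ Yᶜ = 0 ∧
    ∀ (t : Pt d) (s : Set (Patch d)), μ (patchTrans t ⁻¹' s) = μ s

/-- `ν` is the pushforward of `μ` under `F`. -/
def PushForwardEq {d : ℕ} (F : Patch d → Patch d)
    (μ ν : @MeasureTheory.Measure (Patch d) (tilingMeasurable d)) : Prop :=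
  letI := tilingMeasurable d
  ∀ s : Set (Patch d), μ (F ⁻¹' s) = ν s

section Helpers

variable {d l k : ℕ} {X : Set (Patch d)}

@[simp] lemma tileTrans_zero (D : Set (Pt d)) : tileTrans (0 : Pt d) D = D := by
  simp [tileTrans]

lemma tileTrans_comp (s t : Pt d) (D : Set (Pt d)) :
    tileTrans s (tileTrans t D) = tileTrans (s + t) D := by
  simp only [tileTrans, Set.image_image, add_assoc]

@[simp] lemma patchTrans_zero (x : Patch d) : patchTrans (0 : Pt d) x = x := by
  simp [patchTrans]

lemma patchTrans_comp (s t : Pt d) (x : Patch d) :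
    patchTrans s (patchTrans t x) = patchTrans (s + t) x := by
  simp only [patchTrans, Set.image_image]
  exact Set.image_congr fun D _ => tileTrans_comp s t D

lemma patchTrans_mono {x y : Patch d} (t : Pt d) (h : x ⊆ y) :
    patchTrans t x ⊆ patchTrans t y := Set.image_mono h

lemma patchTrans_singleton (t : Pt d) (E : Set (Pt d)) :
    patchTrans t {E} = {tileTrans t E} := by simp [patchTrans]

lemma psupp_mono {x y : Patch d} (h : x ⊆ y) : psupp x ⊆ psupp y :=
  Set.biUnion_subset_biUnion_left h

lemma psupp_patchTrans (t : Pt d) (x : Patch d) :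
    psupp (patchTrans t x) = (fun p => t + p) '' psupp x := by
  simp only [psupp, patchTrans, tileTrans]
  ext p; simp only [Set.mem_iUnion, Set.mem_image]
  constructor
  · rintro ⟨D, ⟨E, hE, rfl⟩, hp⟩
    rcases hp with ⟨q, hq, rfl⟩
    exact ⟨q, ⟨E, hE, hq⟩, rfl⟩
  · rintro ⟨q, ⟨E, hE, hq⟩, rfl⟩
    exact ⟨(fun p => t + p) '' E, ⟨E, hE, rfl⟩, ⟨q, hq, rfl⟩⟩

@[simp] lemma psupp_singleton (E : Set (Pt d)) : psupp ({E} : Patch d) = E := by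
  simp [psupp]

lemma mem_psupp {x : Patch d} {E : Set (Pt d)} (hE : E ∈ x) : E ⊆ psupp x :=
  Set.subset_biUnion_of_mem (u := fun E => E) hE

end Helpers
section Helpers2

variable {d l k : ℕ} {X : Set (Patch d)}

@[simp] lemma substSeq_zero (S : Fin k → Substitution d X) (a : ℕ → Fin k) (x : Patch d) :
    substSeq S a 0 x = x := rfl

lemma substSeq_succ (S : Fin k → Substitution d X) (a : ℕ → Fin k) (n : ℕ) (x : Patch d) :
    substSeq S a (n + 1) x = substPatch (S (a 0)) (substSeq S (fun i => a (i + 1)) n x) := rfl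

@[simp] lemma matSeq_zero (A : Fin k → Matrix (Fin l) (Fin l) ℕ) (a : ℕ → Fin k) :
    matSeq A a 0 = 1 := rfl

lemma matSeq_succ (A : Fin k → Matrix (Fin l) (Fin l) ℕ) (a : ℕ → Fin k) (n : ℕ) :
    matSeq A a (n + 1) = A (a 0) * matSeq A (fun i => a (i + 1)) n := rfl

lemma substPatch_mono (S : Substitution d X) {x y : Patch d} (h : x ⊆ y) :
    substPatch S x ⊆ substPatch S y :=
  Set.biUnion_subset_biUnion_left h

lemma map_subset_substPatch (S : Substitution d X) {x : Patch d} {E : Set (Pt d)} (hE : E ∈ x) :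
    S.map E ⊆ substPatch S x :=
  Set.subset_biUnion_of_mem (u := fun E => S.map E) hE

lemma substPatch_patchTrans (S : Substitution d X) (t : Pt d) (x : Patch d) :
    substPatch S (patchTrans t x) = patchTrans (S.lam • t) (substPatch S x) := by
  simp only [substPatch, patchTrans]
  ext G
  simp only [Set.mem_iUnion, Set.mem_image]
  constructor
  · rintro ⟨E, ⟨E', hE', rfl⟩, hG⟩
    have := S.equivar t E'
    rw [this] at hG
    rcases hG with ⟨G', hG', rfl⟩
    exact ⟨G', ⟨E', hE', hG'⟩, rfl⟩
  · rintro ⟨G', ⟨E', hE', hG'⟩, rfl⟩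
    refine ⟨tileTrans t E', ⟨E', hE', rfl⟩, ?_⟩
    rw [S.equivar t E']
    exact ⟨G', hG', rfl⟩

lemma substSeq_mono (S : Fin k → Substitution d X) (a : ℕ → Fin k) (n : ℕ) {x y : Patch d}
    (h : x ⊆ y) : substSeq S a n x ⊆ substSeq S a n y := by
  induction n generalizing a x y with
  | zero => exact h
  | succ n ih => exact substPatch_mono _ (ih _ h)

/-- `Λ_n`, the product of dilatation factors. -/
def lamProd (S : Fin k → Substitution d X) : (ℕ → Fin k) → ℕ → ℝ
  | _, 0 => 1
  | a, n + 1 => (S (a 0)).lam * lamProd S (fun i => a (i + 1)) n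

lemma one_le_lamProd (S : Fin k → Substitution d X) (a : ℕ → Fin k) (n : ℕ) :
    1 ≤ lamProd S a n := by
  induction n generalizing a with
  | zero => exact le_refl 1
  | succ n ih =>
    have h1 : (1 : ℝ) ≤ (S (a 0)).lam := le_of_lt (S (a 0)).one_lt_lam
    calc (1 : ℝ) = 1 * 1 := by ring
    _ ≤ (S (a 0)).lam * lamProd S (fun i => a (i + 1)) n := by
        apply mul_le_mul h1 (ih _) (by norm_num) (by linarith)
    _ = lamProd S a (n + 1) := rfl

lemma substSeq_patchTrans (S : Fin k → Substitution d X) (a : ℕ → Fin k) (n : ℕ) (t : Pt d)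
    (x : Patch d) :
    substSeq S a n (patchTrans t x) = patchTrans (lamProd S a n • t) (substSeq S a n x) := by
  induction n generalizing a x with
  | zero => simp [lamProd]
  | succ n ih =>
    rw [substSeq_succ, ih, substPatch_patchTrans, substSeq_succ, smul_smul]
    rfl

lemma substSeq_add (S : Fin k → Substitution d X) (a : ℕ → Fin k) (n m : ℕ) (x : Patch d) :
    substSeq S a (n + m) x = substSeq S a n (substSeq S (fun i => a (i + n)) m x) := by
  induction n generalizing a with
  | zero => rw [Nat.zero_add]; rfl
  | succ n ih =>
    have e : n + 1 + m = (n + m) + 1 := by ring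
    rw [e, substSeq_succ, ih, substSeq_succ]
    rfl

lemma substSeq_biUnion (S : Fin k → Substitution d X) (a : ℕ → Fin k) (n : ℕ) (x : Patch d) :
    substSeq S a n x = ⋃ E ∈ x, substSeq S a n {E} := by
  induction n generalizing a x with
  | zero => exact (Set.biUnion_of_singleton x).symm
  | succ n ih =>
    rw [substSeq_succ, ih]
    ext G
    simp only [substPatch, Set.mem_iUnion]
    constructor
    · rintro ⟨F, hF, hG⟩
      obtain ⟨E, hE, hF⟩ := hF
      exact ⟨E, hE, map_subset_substPatch _ hF hG⟩
    · rintro ⟨E, hE, hG⟩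
      rw [substSeq_succ] at hG
      simp only [substPatch, Set.mem_iUnion] at hG
      obtain ⟨F, hF, hG⟩ := hG
      exact ⟨F, ⟨E, hE, hF⟩, hG⟩

end Helpers2
section Helpers3

variable {d l k : ℕ} {X : Set (Patch d)}

lemma singleton_patches {D : Set (Pt d)} (hD : D ∈ TilesOf X) : ({D} : Patch d) ∈ Patches X := by
  obtain ⟨z, hz, hDz⟩ := hD
  exact ⟨Set.finite_singleton _, z, hz, Set.singleton_subset_iff.2 hDz⟩

lemma tile_of_patches {x' : Patch d} (h : x' ∈ Patches X) {E : Set (Pt d)} (hE : E ∈ x') :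
    E ∈ TilesOf X := by
  obtain ⟨-, z, hz, hsub⟩ := h
  exact ⟨z, hz, hsub hE⟩

lemma substPatch_patches (S : Substitution d X) {x' : Patch d} (h : x' ∈ Patches X) :
    substPatch S x' ∈ Patches X := S.maps_patches x' h

lemma substSeq_patches (S : Fin k → Substitution d X) (a : ℕ → Fin k) (n : ℕ) {x' : Patch d}
    (h : x' ∈ Patches X) : substSeq S a n x' ∈ Patches X := by
  induction n generalizing a with
  | zero => exact h
  | succ n ih => exact substPatch_patches _ (ih _)

lemma psupp_biUnion {I : Type*} (Q : Set I) (f : I → Patch d) :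
    psupp (⋃ i ∈ Q, f i) = ⋃ i ∈ Q, psupp (f i) := by
  simp only [psupp]
  ext p
  simp only [Set.mem_iUnion]
  constructor
  · rintro ⟨E, ⟨i, hi, hE⟩, hp⟩
    exact ⟨i, hi, E, hE, hp⟩
  · rintro ⟨i, hi, E, hE, hp⟩
    exact ⟨E, ⟨i, hi, hE⟩, hp⟩

lemma psupp_substPatch (S : Substitution d X) {x' : Patch d} (h : x' ∈ Patches X) :
    psupp (substPatch S x') = (fun p => S.lam • p) '' psupp x' := by
  have : substPatch S x' = ⋃ E ∈ x', S.map E := rfl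
  rw [this, psupp_biUnion]
  have h2 : ∀ E ∈ x', psupp (S.map E) = (fun p => S.lam • p) '' E := fun E hE =>
    S.supp_eq E (tile_of_patches h hE)
  rw [Set.iUnion₂_congr h2]
  simp only [psupp]
  rw [Set.image_iUnion₂]

lemma psupp_substSeq (S : Fin k → Substitution d X) (a : ℕ → Fin k) (n : ℕ) {x' : Patch d}
    (h : x' ∈ Patches X) :
    psupp (substSeq S a n x') = (fun p => lamProd S a n • p) '' psupp x' := by
  induction n generalizing a with
  | zero => simp [lamProd]
  | succ n ih =>
    rw [substSeq_succ, psupp_substPatch _ (substSeq_patches S _ n h), ih]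
    rw [Set.image_image]
    show _ = (fun p => lamProd S a (n + 1) • p) '' psupp x'
    apply Set.image_congr
    intro p _
    rw [smul_smul]
    rfl

lemma exists_copy (S : Fin k → Substitution d X) (Dp : Fin l → Set (Pt d)) :
    ∀ (n : ℕ) (a : ℕ → Fin k) (i j : Fin l),
    0 < matSeq (fun i => structMat Dp (S i)) a n i j →
    ∃ w : Pt d, tileTrans w (Dp i) ∈ substSeq S a n ({Dp j} : Patch d) := by
  intro n
  induction n with
  | zero =>
    intro a i j h
    have hij : i = j := by
      by_contra hne
      rw [matSeq_zero, Matrix.one_apply_ne hne] at h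
      exact lt_irrefl 0 h
    subst hij
    exact ⟨0, by simp⟩
  | succ n ih =>
    intro a i j h
    rw [matSeq_succ, Matrix.mul_apply] at h
    obtain ⟨m, -, hm⟩ := Finset.exists_ne_zero_of_sum_ne_zero h.ne'
    rw [Nat.mul_ne_zero_iff] at hm
    obtain ⟨w, hw⟩ := ih (fun i => a (i + 1)) m j (Nat.pos_of_ne_zero hm.2)
    have hnon : {G | G ∈ (S (a 0)).map (Dp m) ∧ ∃ t : Pt d, G = tileTrans t (Dp i)}.Nonempty :=
      Set.nonempty_of_ncard_ne_zero hm.1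
    obtain ⟨G, hGmem, v, rfl⟩ := hnon
    refine ⟨(S (a 0)).lam • w + v, ?_⟩
    rw [substSeq_succ]
    have h1 : (S (a 0)).map (tileTrans w (Dp m)) ⊆
        substPatch (S (a 0)) (substSeq S (fun i => a (i + 1)) n {Dp j}) :=
      map_subset_substPatch _ hw
    apply h1
    rw [(S (a 0)).equivar w (Dp m), ← tileTrans_comp]
    exact Set.mem_image_of_mem _ hGmem

end Helpers3
section Helpers4

variable {d l k : ℕ} {X : Set (Patch d)}

lemma int_union_empty {α : Type*} [TopologicalSpace α] {A B : Set α} (hA : IsClosed A)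
    (hiA : interior A = ∅) (hiB : interior B = ∅) : interior (A ∪ B) = ∅ := by
  have h1 : interior (A ∪ B) ∩ Aᶜ ⊆ B := fun p hp => (interior_subset hp.1).resolve_left hp.2
  have h1' : interior (A ∪ B) ∩ Aᶜ ⊆ interior B :=
    ((isOpen_interior.inter hA.isOpen_compl).subset_interior_iff).mpr h1
  rw [hiB, Set.subset_empty_iff] at h1'
  have h2 : interior (A ∪ B) ⊆ A := by
    intro p hp
    by_contra hpA
    exact absurd h1' (Set.nonempty_iff_ne_empty.mp ⟨p, hp, hpA⟩)
  have h3 : interior (A ∪ B) ⊆ interior A := interior_maximal h2 isOpen_interior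
  rw [hiA] at h3
  exact Set.subset_empty_iff.mp h3

lemma int_biUnion_empty {α : Type*} [TopologicalSpace α] {P : Set (Set α)} (hP : P.Finite)
    (h : ∀ A ∈ P, IsClosed A ∧ interior A = ∅) : interior (⋃ A ∈ P, A) = ∅ := by
  revert h
  refine Set.Finite.induction_on (motive := fun P _ => (∀ A ∈ P, IsClosed A ∧ interior A = ∅) →
    interior (⋃ A ∈ P, A) = ∅) P hP (fun _ => by simp) ?_
  intro A Q hA hQfin ih h
  rw [Set.biUnion_insert]
  exact int_union_empty (h A (Set.mem_insert _ _)).1 (h A (Set.mem_insert _ _)).2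
    (ih fun B hB => h B (Set.mem_insert_of_mem _ hB))

lemma tile_interior_nonempty {E : Set (Pt d)} (h : IsTile E) : (interior E).Nonempty := by
  rcases Set.eq_empty_or_nonempty (interior E) with he | he
  · exfalso
    have h2 := h.2.2
    rw [he, closure_empty] at h2
    exact (h.2.1.nonempty).ne_empty h2
  · exact he

lemma capture {z P : Patch d} (htile : ∀ G ∈ z, IsTile G)
    (hdisj : ∀ G ∈ z, ∀ G' ∈ z, G ≠ G' → interior G ∩ interior G' = ∅)
    (hPz : P ⊆ z) (hPfin : P.Finite) {F : Set (Pt d)} (hF : F ∈ z) (hFP : F ⊆ psupp P) :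
    F ∈ P := by
  by_contra hFnot
  have hiF : (interior F).Nonempty := tile_interior_nonempty (htile F hF)
  have hsub : interior F ⊆ ⋃ A ∈ (fun G => G \ interior G) '' P, A := by
    intro p hp
    obtain ⟨G, hG, hpG⟩ := Set.mem_iUnion₂.mp (hFP (interior_subset hp))
    have hGF : G ≠ F := fun h => hFnot (h ▸ hG)
    have hpint : p ∉ interior G := by
      intro hpint
      have hd := hdisj G (hPz hG) F hF hGF
      exact absurd (Set.mem_inter hpint hp) (by rw [hd]; exact Set.notMem_empty p)
    exact Set.mem_biUnion (Set.mem_image_of_mem _ hG) ⟨hpG, hpint⟩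
  have hempty : interior (⋃ A ∈ (fun G => G \ interior G) '' P, A) = ∅ := by
    apply int_biUnion_empty (hPfin.image _)
    rintro A ⟨G, hG, rfl⟩
    have htG := htile G (hPz hG)
    constructor
    · exact (htG.1.isClosed).sdiff isOpen_interior
    · apply Set.eq_empty_iff_forall_notMem.mpr
      intro p hp
      exact (interior_subset hp).2 (interior_mono Set.diff_subset hp)
  have hfin : interior F ⊆ interior (⋃ A ∈ (fun G => G \ interior G) '' P, A) :=
    interior_maximal hsub isOpen_interior
  rw [hempty] at hfin
  obtain ⟨p, hp⟩ := hiF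
  exact absurd (hfin hp) (Set.notMem_empty p)

lemma exists_diam_bound (hXflc : FLC X) :
    ∃ Δ : ℝ, 0 ≤ Δ ∧ ∀ x ∈ X, ∀ E ∈ x, Metric.diam E ≤ Δ := by
  obtain ⟨F, hF⟩ := hXflc 1
  refine ⟨((F.sup fun y0 => (Metric.diam (psupp y0)).toNNReal : NNReal) : ℝ),
    NNReal.coe_nonneg _, ?_⟩
  intro x hx E hE
  have h1 : ({E} : Patch d) ∈ PatchesCard X 1 :=
    ⟨Set.finite_singleton _, Set.ncard_singleton _, x, hx, Set.singleton_subset_iff.2 hE⟩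
  obtain ⟨y0, hy0, t, hty⟩ := hF _ h1
  have h2 : psupp (patchTrans t y0) = E := by rw [hty]; exact psupp_singleton E
  have hdiam : Metric.diam E = Metric.diam (psupp y0) := by
    rw [← h2, psupp_patchTrans]
    exact (Isometry.of_dist_eq fun p q => dist_add_left t p q).diam_image _
  rw [hdiam]
  calc Metric.diam (psupp y0) ≤ ((Metric.diam (psupp y0)).toNNReal : ℝ) :=
        Real.le_coe_toNNReal _
  _ ≤ _ := NNReal.coe_le_coe.mpr
      (Finset.le_sup (f := fun y0 => (Metric.diam (psupp y0)).toNNReal) hy0)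

lemma vol_interior_translate (s : Pt d) (E : Set (Pt d)) :
    volume (interior (tileTrans s E)) = volume (interior E) := by
  have h1 : interior (tileTrans s E) = tileTrans s (interior E) :=
    ((Homeomorph.addLeft s).image_interior E).symm
  rw [h1]
  show volume ((fun p => s + p) '' interior E) = _
  rw [Set.image_add_left]
  exact measure_preimage_add volume _ _

lemma singleton_patchTrans_inv {y0 : Patch d} {t : Pt d} {E : Set (Pt d)}
    (h : patchTrans t y0 = {E}) : y0 = {tileTrans (-t) E} := by
  have := congrArg (patchTrans (-t)) h
  rw [patchTrans_comp, neg_add_cancel, patchTrans_zero, patchTrans_singleton] at this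
  exact this

end Helpers4
section Helpers5

variable {d l k : ℕ} {X : Set (Patch d)}

lemma tiles_finite (hX : ∀ x ∈ X, IsTiling x) (hXflc : FLC X) {x : Patch d} (hx : x ∈ X)
    {B : Set (Pt d)} (hB : Bornology.IsBounded B) :
    {E | E ∈ x ∧ (E ∩ B).Nonempty}.Finite := by
  classical
  obtain ⟨Δ, hΔ0, hΔ⟩ := exists_diam_bound hXflc
  obtain ⟨ρ, hρ⟩ := hB.subset_closedBall 0
  set T := {E | E ∈ x ∧ (E ∩ B).Nonempty} with hT
  have hTsub : ∀ E ∈ T, E ⊆ Metric.closedBall (0 : Pt d) (ρ + Δ) := by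
    rintro E ⟨hEx, p, hpE, hpB⟩ q hq
    have hEb : Bornology.IsBounded E := ((hX x hx).1.1 E hEx).1.isBounded
    have h1 : dist q p ≤ Δ := le_trans (Metric.dist_le_diam_of_mem hEb hq hpE) (hΔ x hx E hEx)
    have h2 : dist p 0 ≤ ρ := hρ hpB
    have : dist q (0 : Pt d) ≤ ρ + Δ := by
      calc dist q (0 : Pt d) ≤ dist q p + dist p 0 := dist_triangle q p 0
      _ ≤ Δ + ρ := add_le_add h1 h2
      _ = ρ + Δ := by ring
    exact Metric.mem_closedBall.mpr this
  by_contra hfin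
  have hinf : T.Infinite := hfin
  obtain ⟨F, hF⟩ := hXflc 1
  have hcover : T ⊆ ⋃ y0 ∈ (F : Set (Patch d)), {E ∈ T | ∃ t : Pt d, patchTrans t y0 = {E}} := by
    intro E hE
    have h1 : ({E} : Patch d) ∈ PatchesCard X 1 :=
      ⟨Set.finite_singleton _, Set.ncard_singleton _, x, hx, Set.singleton_subset_iff.2 hE.1⟩
    obtain ⟨y0, hy0, t, hty⟩ := hF _ h1
    exact Set.mem_biUnion hy0 ⟨hE, t, hty⟩
  have hbig : ∃ y0 ∈ F, {E ∈ T | ∃ t : Pt d, patchTrans t y0 = {E}}.Infinite := by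
    by_contra hall
    push_neg at hall
    exact hinf ((Set.Finite.biUnion F.finite_toSet hall).subset hcover)
  obtain ⟨y0, hy0F, hinf2⟩ := hbig
  set T2 := {E ∈ T | ∃ t : Pt d, patchTrans t y0 = {E}} with hT2
  obtain ⟨E1, hE1⟩ := hinf2.nonempty
  have hE1tile : IsTile E1 := (hX x hx).1.1 E1 hE1.1.1
  set v := volume (interior E1) with hv'
  have hv : 0 < v := isOpen_interior.measure_pos volume (tile_interior_nonempty hE1tile)
  obtain ⟨t1, ht1⟩ := hE1.2
  have hveq : ∀ E ∈ T2, volume (interior E) = v := by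
    rintro E ⟨-, t, ht⟩
    have h1 := singleton_patchTrans_inv ht
    have h2 := singleton_patchTrans_inv ht1
    rw [h1] at h2
    have h3 : tileTrans (-t1) E1 = tileTrans (-t) E := Set.singleton_eq_singleton_iff.mp h2.symm
    have h4 : E1 = tileTrans (t1 + -t) E := by
      have := congrArg (tileTrans t1) h3
      rw [tileTrans_comp, tileTrans_comp, add_neg_cancel, tileTrans_zero] at this
      exact this
    rw [hv', h4, vol_interior_translate]
  set C := volume (Metric.closedBall (0 : Pt d) (ρ + Δ)) with hC'
  have hC : C ≠ ⊤ := (isCompact_closedBall _ _).measure_lt_top.ne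
  have hdivtop : C / v ≠ ⊤ := by
    intro htop
    rcases ENNReal.div_eq_top.mp htop with ⟨-, h0⟩ | ⟨hCt, -⟩
    · exact hv.ne' h0
    · exact hC hCt
  obtain ⟨n, hngt⟩ := ENNReal.exists_nat_gt hdivtop
  obtain ⟨s0, hsub0, hs0fin, hcard0⟩ := hinf2.exists_subset_ncard_eq n
  set s := hs0fin.toFinset with hs
  have hsub : ∀ E ∈ s, E ∈ T2 := fun E hE => hsub0 (hs0fin.mem_toFinset.mp hE)
  have hcard : s.card = n := by rw [← hcard0, hs]; exact (Set.ncard_eq_toFinset_card _ hs0fin).symm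
  have hdisjo : (↑s : Set (Set (Pt d))).PairwiseDisjoint (fun E => interior E) := by
    intro E hE E' hE' hne
    have h := (hX x hx).1.2 E (hsub E hE).1.1 E' (hsub E' hE').1.1 hne
    exact Set.disjoint_iff_inter_eq_empty.mpr h
  have hsum : volume (⋃ E ∈ s, interior E) = ∑ E ∈ s, volume (interior E) :=
    measure_biUnion_finset hdisjo fun E _ => isOpen_interior.measurableSet
  have hle : ∑ E ∈ s, volume (interior E) ≤ C := by
    rw [← hsum]
    apply measure_mono
    apply Set.iUnion₂_subset
    intro E hE
    exact interior_subset.trans (hTsub E (hsub E hE).1)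
  have hconst : ∑ E ∈ s, volume (interior E) = n * v := by
    rw [Finset.sum_congr rfl fun E hE => hveq E (hsub E hE), Finset.sum_const, hcard,
      nsmul_eq_mul]
  rw [hconst] at hle
  have hnle : (n : ENNReal) ≤ C / v :=
    (ENNReal.le_div_iff_mul_le (Or.inl hv.ne') (Or.inr hC)).mpr hle
  exact absurd hnle (not_le.mpr hngt)

end Helpers5
section Helpers6

variable {d l k : ℕ} {X : Set (Patch d)}

lemma boost (S : Fin k → Substitution d X) (a : ℕ → Fin k) (Dp : Fin l → Set (Pt d))
    (hDp : IsPrototileBasis X Dp) (D : Set (Pt d)) (hD : D ∈ TilesOf X)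
    (hprim : SeqPrimitive (fun i => structMat Dp (S i)) a) (M : ℕ) :
    ∃ (N : ℕ) (v : Pt d),
      patchTrans v (substSeq S a M {D}) ⊆ substSeq S a (M + (N + 1)) ({D} : Patch d) := by
  obtain ⟨N, hN⟩ := hprim M
  obtain ⟨i0, t0, ht0⟩ := hDp.2.2 D hD
  have hfun : (fun m => a (M + m)) = (fun m => a (m + M)) := by
    funext m; rw [Nat.add_comm]
  rw [hfun] at hN
  obtain ⟨w, hw⟩ := exists_copy S Dp (N + 1) (fun m => a (m + M)) i0 i0 (hN i0 i0)
  set Λ' := lamProd S (fun m => a (m + M)) (N + 1) with hΛ'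
  set v' := Λ' • t0 + w - t0 with hv'
  have hsing : ({tileTrans v' D} : Patch d) ⊆ substSeq S (fun m => a (m + M)) (N + 1) {D} := by
    rw [Set.singleton_subset_iff]
    have e1 : ({D} : Patch d) = patchTrans t0 {Dp i0} := by
      rw [patchTrans_singleton, ht0]
    rw [e1, substSeq_patchTrans]
    have e2 : tileTrans v' D = tileTrans (Λ' • t0) (tileTrans w (Dp i0)) := by
      rw [← ht0, tileTrans_comp, tileTrans_comp]
      have hvec : v' + t0 = Λ' • t0 + w := by rw [hv']; abel
      rw [hvec]
    rw [e2]
    exact Set.mem_image_of_mem _ hw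
  refine ⟨N, lamProd S a M • v', ?_⟩
  have h1 : substSeq S a M ({tileTrans v' D} : Patch d) ⊆ substSeq S a (M + (N + 1)) {D} := by
    rw [substSeq_add]
    exact substSeq_mono S a M hsing
  have h2 : substSeq S a M ({tileTrans v' D} : Patch d)
      = patchTrans (lamProd S a M • v') (substSeq S a M {D}) := by
    rw [← patchTrans_singleton, substSeq_patchTrans]
  rw [← h2]
  exact h1

lemma boost_iter (S : Fin k → Substitution d X) (a : ℕ → Fin k) (Dp : Fin l → Set (Pt d))
    (hDp : IsPrototileBasis X Dp) (D : Set (Pt d)) (hD : D ∈ TilesOf X)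
    (hprim : SeqPrimitive (fun i => structMat Dp (S i)) a) (P : Patch d) :
    ∀ (j M : ℕ) (u : Pt d), patchTrans u P ⊆ substSeq S a M {D} →
      ∃ (M' : ℕ) (u' : Pt d), M + j ≤ M' ∧ patchTrans u' P ⊆ substSeq S a M' ({D} : Patch d) := by
  intro j
  induction j with
  | zero => exact fun M u h => ⟨M, u, by omega, h⟩
  | succ j ih =>
    intro M u h
    obtain ⟨M', u', hle, h'⟩ := ih M u h
    obtain ⟨N, v, hb⟩ := boost S a Dp hDp D hD hprim M'
    refine ⟨M' + (N + 1), v + u', by omega, ?_⟩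
    rw [← patchTrans_comp]
    exact (patchTrans_mono v h').trans hb

end Helpers6
/-- The translation dynamical system `(X_ā, T)` is minimal: every orbit is dense. -/
theorem multiSpace_minimal
    {d l k : ℕ} (hd : 0 < d) (hl : 0 < l) (hk : 0 < k)
    (X : Set (Patch d)) (hX : ∀ x ∈ X, IsTiling x)
    (hXinv : TransInvariant X) (hXflc : FLC X)
    (Dp : Fin l → Set (Pt d)) (hDp : IsPrototileBasis X Dp)
    (S : Fin k → Substitution d X)
    (D : Set (Pt d)) (hD : D ∈ TilesOf X)
    (a : ℕ → Fin k)
    (hprim : SeqPrimitive (fun i => structMat Dp (S i)) a)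
    :
    ∀ x ∈ multiSpace S a D, ∀ y ∈ multiSpace S a D, ∀ ε : ℝ, 0 < ε →
      ∃ t : Pt d, dT (patchTrans t x) y < ε := by
  classical
  intro x hx y hy ε hε
  obtain ⟨Δ, hΔ0, hΔ⟩ := exists_diam_bound hXflc
  obtain ⟨hxX, hxapp⟩ := hx
  obtain ⟨hyX, hyapp⟩ := hy
  -- choice of r
  set r : ℝ := min (ε / 2) (1 / 2) with hr
  have hr0 : 0 < r := lt_min (by linarith) (by norm_num)
  have hrhalf : r ≤ 1 / 2 := min_le_right _ _
  have hsqrt1 : (1 : ℝ) < Real.sqrt 2 := by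
    have h := Real.sqrt_lt_sqrt (by norm_num : (0:ℝ) ≤ 1) (by norm_num : (1:ℝ) < 2)
    simpa using h
  have hrsqrt : r < Real.sqrt 2 / 2 := by
    calc r ≤ 1 / 2 := hrhalf
    _ < Real.sqrt 2 / 2 := by linarith
  have hrε : r < ε := lt_of_le_of_lt (min_le_left _ _) (by linarith)
  -- the chunk of y around the ball of radius 1/r
  set y' := {E | E ∈ y ∧ (E ∩ Metric.closedBall (0 : Pt d) (1 / r)).Nonempty} with hy'
  have hy'fin : y'.Finite := tiles_finite hX hXflc hyX Metric.isBounded_closedBall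
  have hy'sub : y' ⊆ y := fun E hE => hE.1
  have hy'cover : Metric.closedBall (0 : Pt d) (1 / r) ⊆ psupp y' := by
    intro p hp
    have hp2 : p ∈ psupp y := by rw [(hX y hyX).2]; trivial
    obtain ⟨E, hE, hpE⟩ := Set.mem_iUnion₂.mp hp2
    exact Set.mem_biUnion (⟨hE, p, hpE, hp⟩ : E ∈ y') hpE
  have hy'bdd : Bornology.IsBounded (psupp y') := by
    refine Bornology.IsBounded.subset Metric.isBounded_closedBall
      (?_ : psupp y' ⊆ Metric.closedBall (0 : Pt d) (1 / r + Δ))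
    intro p hp
    obtain ⟨E, hE, hpE⟩ := Set.mem_iUnion₂.mp hp
    obtain ⟨q, hqE, hqB⟩ := hE.2
    have hEb := ((hX y hyX).1.1 E hE.1).1.isBounded
    have htri : dist p 0 ≤ dist p q + dist q 0 := dist_triangle _ _ _
    have h1 : dist p q ≤ Δ :=
      le_trans (Metric.dist_le_diam_of_mem hEb hpE hqE) (hΔ y hyX E hE.1)
    have h2 : dist q 0 ≤ 1 / r := hqB
    exact Metric.mem_closedBall.mpr (by linarith)
  -- embed y' into a supertile
  obtain ⟨n, hn0, t1, ht1⟩ := hyapp y' hy'sub hy'fin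
  obtain ⟨N, hN⟩ := hprim n
  -- the chunk of x around the ball of radius R
  have hΛ2pos : (0:ℝ) ≤ lamProd S a (n + (N + 1)) :=
    le_trans zero_le_one (one_le_lamProd S a (n + (N + 1)))
  set R : ℝ := lamProd S a (n + (N + 1)) * Δ + 1 with hR
  have hΛ2Δ : 0 ≤ lamProd S a (n + (N + 1)) * Δ := mul_nonneg hΛ2pos hΔ0
  have hR0 : 0 < R := by rw [hR]; linarith
  set x' := {E | E ∈ x ∧ (E ∩ Metric.closedBall (0 : Pt d) R).Nonempty} with hx'
  have hx'fin : x'.Finite := tiles_finite hX hXflc hxX Metric.isBounded_closedBall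
  have hx'sub : x' ⊆ x := fun E hE => hE.1
  have hx'cover : Metric.closedBall (0 : Pt d) R ⊆ psupp x' := by
    intro p hp
    have hp2 : p ∈ psupp x := by rw [(hX x hxX).2]; trivial
    obtain ⟨E, hE, hpE⟩ := Set.mem_iUnion₂.mp hp2
    exact Set.mem_biUnion (⟨hE, p, hpE, hp⟩ : E ∈ x') hpE
  obtain ⟨M0, hM00, u0, hu0⟩ := hxapp x' hx'sub hx'fin
  obtain ⟨M, u, hMle, hu⟩ := boost_iter S a Dp hDp D hD hprim x' (n + (N + 1)) M0 u0 hu0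
  have hMn2 : n + (N + 1) ≤ M := by omega
  have hMm : M = (n + (N + 1)) + (M - (n + (N + 1))) := by omega
  set Q := substSeq S (fun i => a (i + (n + (N + 1)))) (M - (n + (N + 1))) ({D} : Patch d)
    with hQ
  have hdec : substSeq S a M ({D} : Patch d) = substSeq S a (n + (N + 1)) Q := by
    rw [hMm, substSeq_add]
  have hDPat : ({D} : Patch d) ∈ Patches X := singleton_patches hD
  have hQPat : Q ∈ Patches X := substSeq_patches _ _ _ hDPat
  obtain ⟨hMfin, z, hzX, hMz⟩ := substSeq_patches S a M hDPat
  -- find the (n+N+1)-supertile containing the point u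
  have h0B : (0 : Pt d) ∈ Metric.closedBall (0 : Pt d) R := Metric.mem_closedBall_self hR0.le
  have hu_supp : u ∈ psupp (patchTrans u x') := by
    rw [psupp_patchTrans]
    exact ⟨0, hx'cover h0B, by simp⟩
  have hu2 : u ∈ psupp (substSeq S a (n + (N + 1)) Q) := by
    rw [← hdec]
    exact psupp_mono hu hu_supp
  rw [substSeq_biUnion S a (n + (N + 1)) Q, psupp_biUnion] at hu2
  obtain ⟨E, hEQ, huE⟩ := Set.mem_iUnion₂.mp hu2
  have hEtile : E ∈ TilesOf X := tile_of_patches hQPat hEQ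
  obtain ⟨zE, hzE, hEzE⟩ := hEtile
  have hEtile' : IsTile E := (hX zE hzE).1.1 E hEzE
  have hEPat : ({E} : Patch d) ∈ Patches X := singleton_patches ⟨zE, hzE, hEzE⟩
  -- the supertile of E lies inside the translated ball
  have hsuppE : psupp (substSeq S a (n + (N + 1)) ({E} : Patch d)) =
      (fun p => lamProd S a (n + (N + 1)) • p) '' E := by
    rw [psupp_substSeq S a (n + (N + 1)) hEPat, psupp_singleton]
  have hsubtile_bdd : Bornology.IsBounded (psupp (substSeq S a (n + (N + 1)) ({E} : Patch d))) := by
    rw [hsuppE]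
    exact (hEtile'.1.image (continuous_const_smul _)).isBounded
  have hdiam : Metric.diam (psupp (substSeq S a (n + (N + 1)) ({E} : Patch d))) ≤
      lamProd S a (n + (N + 1)) * Δ := by
    rw [hsuppE]
    apply Metric.diam_le_of_forall_dist_le hΛ2Δ
    rintro p ⟨p0, hp0, rfl⟩ q ⟨q0, hq0, rfl⟩
    rw [dist_smul₀]
    have h1 : dist p0 q0 ≤ Δ :=
      le_trans (Metric.dist_le_diam_of_mem hEtile'.1.isBounded hp0 hq0) (hΔ zE hzE E hEzE)
    calc ‖lamProd S a (n + (N + 1))‖ * dist p0 q0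
        = lamProd S a (n + (N + 1)) * dist p0 q0 := by rw [Real.norm_of_nonneg hΛ2pos]
    _ ≤ lamProd S a (n + (N + 1)) * Δ := mul_le_mul_of_nonneg_left h1 hΛ2pos
  have hsub_ball : psupp (substSeq S a (n + (N + 1)) ({E} : Patch d)) ⊆
      Metric.closedBall u R := by
    intro p hp
    have h1 := Metric.dist_le_diam_of_mem hsubtile_bdd hp huE
    exact Metric.mem_closedBall.mpr (le_trans h1 (le_trans hdiam (by rw [hR]; linarith)))
  have hballu : Metric.closedBall u R ⊆ psupp (patchTrans u x') := by
    intro p hp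
    rw [psupp_patchTrans]
    refine ⟨p - u, hx'cover ?_, by show u + (p - u) = p; rw [add_comm, sub_add_cancel]⟩
    rw [Metric.mem_closedBall, dist_zero_right, ← dist_eq_norm]
    exact hp
  -- all tiles of that supertile belong to the chunk of x
  have hsuper_sub : substSeq S a (n + (N + 1)) ({E} : Patch d) ⊆ patchTrans u x' := by
    intro Ftile hFt
    have hFz : Ftile ∈ z := by
      apply hMz
      rw [hdec, substSeq_biUnion S a (n + (N + 1)) Q]
      exact Set.mem_biUnion hEQ hFt
    exact capture (hX z hzX).1.1 (hX z hzX).1.2 (fun G hG => hMz (hu hG))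
      (hx'fin.image _) hFz ((mem_psupp hFt).trans (hsub_ball.trans hballu))
  have hsuper_x : patchTrans (-u) (substSeq S a (n + (N + 1)) ({E} : Patch d)) ⊆ x := by
    have h1 := patchTrans_mono (-u) hsuper_sub
    rw [patchTrans_comp, neg_add_cancel, patchTrans_zero] at h1
    exact h1.trans hx'sub
  -- a copy of S^n {D} inside the supertile of E
  obtain ⟨iE, wE, hwE⟩ := hDp.2.2 E ⟨zE, hzE, hEzE⟩
  obtain ⟨i0, t0, ht0⟩ := hDp.2.2 D hD
  have hfun : (fun m' => a (n + m')) = (fun m' => a (m' + n)) := by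
    funext m'; rw [Nat.add_comm]
  have hNpos := hN i0 iE
  rw [hfun] at hNpos
  obtain ⟨w, hw⟩ := exists_copy S Dp (N + 1) (fun m' => a (m' + n)) i0 iE hNpos
  have hwD : tileTrans (w - t0) D ∈
      substSeq S (fun m' => a (m' + n)) (N + 1) ({Dp iE} : Patch d) := by
    rw [← ht0, tileTrans_comp, sub_add_cancel]
    exact hw
  have hstep1 : patchTrans (lamProd S a n • (w - t0)) (substSeq S a n ({D} : Patch d)) ⊆
      substSeq S a (n + (N + 1)) ({Dp iE} : Patch d) := by
    rw [substSeq_add]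
    have e : patchTrans (lamProd S a n • (w - t0)) (substSeq S a n ({D} : Patch d))
        = substSeq S a n ({tileTrans (w - t0) D} : Patch d) := by
      rw [← patchTrans_singleton, substSeq_patchTrans]
    rw [e]
    exact substSeq_mono S a n (Set.singleton_subset_iff.mpr hwD)
  have hstep2 : patchTrans (lamProd S a (n + (N + 1)) • wE)
      (substSeq S a (n + (N + 1)) ({Dp iE} : Patch d))
      = substSeq S a (n + (N + 1)) ({E} : Patch d) := by
    have hE_eq : ({E} : Patch d) = patchTrans wE ({Dp iE} : Patch d) := by
      rw [patchTrans_singleton, hwE]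
    rw [hE_eq, substSeq_patchTrans]
  -- assemble the translation
  have c2 := (patchTrans_mono (lamProd S a n • (w - t0)) ht1).trans hstep1
  have c3 := patchTrans_mono (lamProd S a (n + (N + 1)) • wE) c2
  rw [hstep2] at c3
  have c5 := (patchTrans_mono (-u) c3).trans hsuper_x
  rw [patchTrans_comp, patchTrans_comp, patchTrans_comp] at c5
  set s : Pt d := -u + lamProd S a (n + (N + 1)) • wE + lamProd S a n • (w - t0) + t1 with hs
  have hy'x : y' ⊆ patchTrans (-s) x := by
    have h1 := patchTrans_mono (-s) c5
    rw [patchTrans_comp] at h1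
    rw [hs] at h1
    rw [neg_add_cancel, patchTrans_zero] at h1
    exact h1
  refine ⟨-s, ?_⟩
  have hdT : dT (patchTrans (-s) x) y ≤ r := by
    unfold dT
    apply csInf_le
    · refine ⟨0, ?_⟩
      rintro ρ (hρ | hρ)
      · rw [Set.mem_singleton_iff] at hρ
        rw [hρ]
        positivity
      · exact hρ.1.le
    · refine Set.mem_union_right _
        ⟨hr0, hrsqrt, y', hy'x, y', hy'sub, hy'bdd, hy'bdd, hy'cover, hy'cover, 0,
          by simpa using hr0.le, patchTrans_zero y'⟩
  linarith

end
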